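/- (Strict negative type ⟹ generalized resistance metric) Let D be a symmetric n×n matrix with zero diagonal such that fᵀDf < 0 for all nonzero f with 1ᵀf = 0. Define G := −(1/2)(I − 11ᵀ/n) D (I − 11ᵀ/n) and Q := G†. Then Q is symmetric PSD with ker(Q) = span(1), and D = 1·diagvec(Q†)ᵀ + diagvec(Q†)·1ᵀ − 2Q†, i.e., D is the resistance matrix of the signed Laplacian Q. -/

import Mathlib

open Matrix Classical

/-- The Moore–Penrose pseudoinverse of a real matrix, defined via its four
characterizing Penrose equations (which have a unique solution). -/
noncomputable def pinv {m k : Type*} [Fintype m] [Fintype k]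
    (A : Matrix m k ℝ) : Matrix k m ℝ :=
  if h : ∃ X : Matrix k m ℝ,
      A * X * A = A ∧ X * A * X = X ∧ (A * X)ᵀ = A * X ∧ (X * A)ᵀ = X * A
  then h.choose else 0

lemma penrose_unique {m k : Type*} [Fintype m] [Fintype k]
    (A : Matrix m k ℝ) (X Y : Matrix k m ℝ)
    (hX : A * X * A = A ∧ X * A * X = X ∧ (A * X)ᵀ = A * X ∧ (X * A)ᵀ = X * A)
    (hY : A * Y * A = A ∧ Y * A * Y = Y ∧ (A * Y)ᵀ = A * Y ∧ (Y * A)ᵀ = Y * A) :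
    X = Y := by
  obtain ⟨hX1, hX2, hX3, hX4⟩ := hX
  obtain ⟨hY1, hY2, hY3, hY4⟩ := hY
  have e1 : Aᵀ = Aᵀ * Yᵀ * Aᵀ := by
    conv_lhs => rw [← hY1]
    simp only [transpose_mul, Matrix.mul_assoc]
  have hAX : A * X = A * Y := by
    have h0 : A * X = Xᵀ * Aᵀ := by rw [← hX3, transpose_mul]
    rw [h0, e1]
    calc Xᵀ * (Aᵀ * Yᵀ * Aᵀ) = (Xᵀ * Aᵀ) * (Yᵀ * Aᵀ) := by simp only [Matrix.mul_assoc]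
    _ = (A * X)ᵀ * (A * Y)ᵀ := by rw [transpose_mul, transpose_mul]
    _ = (A * X) * (A * Y) := by rw [hX3, hY3]
    _ = A * Y := by rw [← Matrix.mul_assoc, hX1]
  have hXA : X * A = Y * A := by
    have h0 : X * A = Aᵀ * Xᵀ := by rw [← hX4, transpose_mul]
    rw [h0, e1]
    calc (Aᵀ * Yᵀ * Aᵀ) * Xᵀ = (Aᵀ * Yᵀ) * (Aᵀ * Xᵀ) := by simp only [Matrix.mul_assoc]
    _ = (Y * A)ᵀ * (X * A)ᵀ := by rw [transpose_mul, transpose_mul]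
    _ = (Y * A) * (X * A) := by rw [hX4, hY4]
    _ = Y * A := by
        rw [← Matrix.mul_assoc, Matrix.mul_assoc Y A X, Matrix.mul_assoc Y (A * X) A, hX1]
  calc X = X * A * X := hX2.symm
  _ = Y * A * X := by rw [hXA]
  _ = Y * (A * X) := by rw [Matrix.mul_assoc]
  _ = Y * (A * Y) := by rw [hAX]
  _ = Y * A * Y := by rw [Matrix.mul_assoc]
  _ = Y := hY2

lemma pinv_eq {m k : Type*} [Fintype m] [Fintype k]
    (A : Matrix m k ℝ) (X : Matrix k m ℝ)
    (hX : A * X * A = A ∧ X * A * X = X ∧ (A * X)ᵀ = A * X ∧ (X * A)ᵀ = X * A) :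
    pinv A = X := by
  have h : ∃ X : Matrix k m ℝ,
      A * X * A = A ∧ X * A * X = X ∧ (A * X)ᵀ = A * X ∧ (X * A)ᵀ = X * A := ⟨X, hX⟩
  rw [pinv, dif_pos h]
  exact penrose_unique A h.choose X h.choose_spec hX

theorem strict_negative_type_is_generalized_resistance_matrix
    {n : ℕ} (D : Matrix (Fin n) (Fin n) ℝ)
    (hsym : Dᵀ = D) (hdiag : ∀ i, D i i = 0)
    (hstrict : ∀ f : Fin n → ℝ, (∑ i, f i) = 0 → f ≠ 0 → f ⬝ᵥ D.mulVec f < 0)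
    (G : Matrix (Fin n) (Fin n) ℝ)
    (hG : G = (-(1 / 2 : ℝ)) •
      ((1 - (1 / (n : ℝ)) • Matrix.of (fun _ _ : Fin n => (1 : ℝ))) * D *
        (1 - (1 / (n : ℝ)) • Matrix.of (fun _ _ : Fin n => (1 : ℝ)))))
    (Q : Matrix (Fin n) (Fin n) ℝ) (hQdef : Q = pinv G) :
    Qᵀ = Q ∧ Q.PosSemidef ∧
    (∀ v : Fin n → ℝ, Q.mulVec v = 0 ↔ ∃ c : ℝ, v = fun _ => c) ∧
    D = Matrix.of (fun _ j => pinv Q j j) + Matrix.of (fun i _ => pinv Q i i) -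
        2 • pinv Q := by
  rcases Nat.eq_zero_or_pos n with hn | hn
  · subst hn
    refine ⟨?_, ⟨?_, ?_⟩, ?_, ?_⟩
    · ext i j; exact i.elim0
    · ext i j; exact i.elim0
    · intro x
      have hx0 : x = 0 := by ext i; exact i.elim0
      subst hx0; simp
    · intro v
      constructor
      · intro _; exact ⟨0, funext fun i => i.elim0⟩
      · intro _; ext i; exact i.elim0
    · ext i j; exact i.elim0
  -- main case
  have hn' : (n : ℝ) ≠ 0 := Nat.cast_ne_zero.mpr hn.ne'
  set P : Matrix (Fin n) (Fin n) ℝ := (1 / (n : ℝ)) • Matrix.of (fun _ _ : Fin n => (1 : ℝ)) with hPdef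
  set J : Matrix (Fin n) (Fin n) ℝ := 1 - P with hJdef
  have hPT : Pᵀ = P := by ext i j; simp [hPdef]
  have hP2 : P * P = P := by
    ext i j
    simp [hPdef, Matrix.mul_apply, Finset.sum_const]
    field_simp
  have hJT : Jᵀ = J := by rw [hJdef, transpose_sub, transpose_one, hPT]
  have hGJ : G = (-(1 / 2 : ℝ)) • (J * D * J) := hG
  have hGT : Gᵀ = G := by
    rw [hGJ, transpose_smul, transpose_mul, transpose_mul, hJT, hsym, mul_assoc]
  have hJP : J * P = 0 := by rw [hJdef, sub_mul, one_mul, hP2, sub_self]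
  have hPJ : P * J = 0 := by rw [hJdef, mul_sub, mul_one, hP2, sub_self]
  have hGP : G * P = 0 := by
    rw [hGJ, smul_mul_assoc, mul_assoc, mul_assoc, hJP, mul_zero, mul_zero, smul_zero]
  have hPG : P * G = 0 := by
    rw [hGJ, mul_smul_comm, ← mul_assoc, ← mul_assoc, hPJ, zero_mul, zero_mul, smul_zero]
  have hPmv : ∀ (x : Fin n → ℝ) (i : Fin n), (P *ᵥ x) i = (1 / (n : ℝ)) * ∑ j, x j := by
    intro x i
    simp [hPdef, Matrix.mulVec, dotProduct, Finset.mul_sum, one_div]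
  have hJmv : ∀ (x : Fin n → ℝ) (i : Fin n),
      (J *ᵥ x) i = x i - (1 / (n : ℝ)) * ∑ j, x j := by
    intro x i
    rw [hJdef, sub_mulVec, one_mulVec]
    simp only [Pi.sub_apply]
    rw [hPmv]
  have hJsum : ∀ x : Fin n → ℝ, (∑ i, (J *ᵥ x) i) = 0 := by
    intro x
    simp only [hJmv, Finset.sum_sub_distrib, Finset.sum_const, Finset.card_univ,
      Fintype.card_fin, nsmul_eq_mul]
    field_simp
    ring
  -- quadratic form identity
  have hquad : ∀ x : Fin n → ℝ,
      x ⬝ᵥ G *ᵥ x = (-(1 / 2 : ℝ)) * ((J *ᵥ x) ⬝ᵥ D *ᵥ (J *ᵥ x)) := by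
    intro x
    rw [hGJ]
    rw [smul_mulVec, dotProduct_smul]
    congr 1
    rw [← mulVec_mulVec, ← mulVec_mulVec, dotProduct_mulVec (v := x) (A := J),
      ← mulVec_transpose, hJT]
  have hGpsd0 : ∀ x : Fin n → ℝ, 0 ≤ x ⬝ᵥ G *ᵥ x := by
    intro x
    rw [hquad]
    rcases eq_or_ne (J *ᵥ x) 0 with h | h
    · simp [h]
    · have := hstrict (J *ᵥ x) (hJsum x) h
      nlinarith
  -- M := G + P is positive definite
  have hMpd : (G + P).PosDef := by
    refine Matrix.PosDef.of_dotProduct_mulVec_pos ?_ ?_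
    · unfold Matrix.IsHermitian
      rw [conjTranspose_add]
      simp only [conjTranspose_eq_transpose_of_trivial]
      rw [hGT, hPT]
    · intro x hx
      have hPq : x ⬝ᵥ P *ᵥ x = (1 / (n : ℝ)) * (∑ i, x i) ^ 2 := by
        rw [dotProduct]
        simp only [hPmv]
        rw [← Finset.sum_mul]
        ring
      have hx' : star x = x := by simp
      rw [add_mulVec, dotProduct_add, hx', hPq]
      rcases eq_or_ne (∑ i, x i) 0 with hs | hs
      · have hJx : J *ᵥ x = x := by
          funext i
          rw [hJmv, hs, mul_zero, sub_zero]
        have h1 : 0 < x ⬝ᵥ G *ᵥ x := by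
          rw [hquad, hJx]
          have := hstrict x hs hx
          nlinarith
        have h2 : 0 ≤ (1 / (n : ℝ)) * (∑ i, x i) ^ 2 := by positivity
        linarith
      · have h1 : 0 ≤ x ⬝ᵥ G *ᵥ x := hGpsd0 x
        have h2 : 0 < (1 / (n : ℝ)) * (∑ i, x i) ^ 2 := by
          have : 0 < (n : ℝ) := by positivity
          positivity
        linarith
  have hMunit : IsUnit (G + P).det := hMpd.det_pos.ne'.isUnit
  set M : Matrix (Fin n) (Fin n) ℝ := G + P with hMdef
  have hMinvM : M⁻¹ * M = 1 := Matrix.nonsing_inv_mul M hMunit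
  have hMMinv : M * M⁻¹ = 1 := Matrix.mul_nonsing_inv M hMunit
  have hMT : Mᵀ = M := by rw [hMdef, transpose_add, hGT, hPT]
  have hMP : M * P = P := by rw [hMdef, add_mul, hGP, hP2, zero_add]
  have hMinvP : M⁻¹ * P = P := by
    calc M⁻¹ * P = M⁻¹ * (M * P) := by rw [hMP]
    _ = (M⁻¹ * M) * P := by rw [mul_assoc]
    _ = P := by rw [hMinvM, one_mul]
  have hMinvT : (M⁻¹)ᵀ = M⁻¹ := by rw [transpose_nonsing_inv, hMT]
  have hPMinv : P * M⁻¹ = P := by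
    have := congrArg Matrix.transpose hMinvP
    rwa [transpose_mul, hMinvT, hPT] at this
  set X : Matrix (Fin n) (Fin n) ℝ := M⁻¹ - P with hXdef
  have hXT : Xᵀ = X := by rw [hXdef, transpose_sub, hMinvT, hPT]
  have hGX : G * X = 1 - P := by
    have hGM : G = M - P := by rw [hMdef, add_sub_cancel_right]
    rw [hXdef, hGM, sub_mul, mul_sub, mul_sub, hMMinv, hMP, hPMinv, hP2]
    abel
  have hXG : X * G = 1 - P := by
    have := congrArg Matrix.transpose hGX
    rwa [transpose_mul, hXT, hGT, transpose_sub, transpose_one, hPT] at this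
  have hPX : P * X = 0 := by rw [hXdef, mul_sub, hPMinv, hP2, sub_self]
  have hpen : G * X * G = G ∧ X * G * X = X ∧ (G * X)ᵀ = G * X ∧ (X * G)ᵀ = X * G := by
    refine ⟨?_, ?_, ?_, ?_⟩
    · rw [hGX, sub_mul, one_mul, hPG, sub_zero]
    · rw [hXG, sub_mul, one_mul, hPX, sub_zero]
    · rw [hGX, transpose_sub, transpose_one, hPT]
    · rw [hXG, transpose_sub, transpose_one, hPT]
  have hQX : Q = X := by rw [hQdef, pinv_eq G X hpen]
  -- pinv Q = G
  have hpenQ : Q * G * Q = Q ∧ G * Q * G = G ∧ (Q * G)ᵀ = Q * G ∧ (G * Q)ᵀ = G * Q := by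
    rw [hQX]
    exact ⟨hpen.2.1, hpen.1, hpen.2.2.2, hpen.2.2.1⟩
  have hpinvQ : pinv Q = G := pinv_eq Q G hpenQ
  have hQT : Qᵀ = Q := by rw [hQX, hXT]
  refine ⟨hQT, ?_, ?_, ?_⟩
  · -- PosSemidef
    refine Matrix.PosSemidef.of_dotProduct_mulVec_nonneg ?_ ?_
    · unfold Matrix.IsHermitian
      simp only [conjTranspose_eq_transpose_of_trivial]
      exact hQT
    · intro x
      have hx' : star x = x := by simp
      rw [hx']
      have hQQ : Q = Q * G * Q := hpenQ.1.symm
      calc x ⬝ᵥ Q *ᵥ x = x ⬝ᵥ (Q * G * Q) *ᵥ x := by rw [← hQQ]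
      _ = x ⬝ᵥ (Q *ᵥ (G *ᵥ (Q *ᵥ x))) := by rw [mulVec_mulVec, mulVec_mulVec]
      _ = (Q *ᵥ x) ⬝ᵥ (G *ᵥ (Q *ᵥ x)) := by
          rw [dotProduct_mulVec (v := x) (A := Q), ← mulVec_transpose, hQT]
      _ ≥ 0 := hGpsd0 _
  · -- kernel
    intro v
    constructor
    · intro hv
      refine ⟨(1 / (n : ℝ)) * ∑ i, v i, ?_⟩
      have h1 : M⁻¹ *ᵥ v = P *ᵥ v := by
        have : X *ᵥ v = 0 := by rw [← hQX]; exact hv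
        rw [hXdef] at this
        have h2 := sub_eq_zero.mp (by rwa [sub_mulVec] at this)
        exact h2
      have h3 : v = (M * P) *ᵥ v := by
        rw [← mulVec_mulVec, ← h1, mulVec_mulVec, hMMinv, one_mulVec]
      rw [hMP] at h3
      funext i
      conv_lhs => rw [h3]
      exact hPmv v i
    · rintro ⟨c, rfl⟩
      have h1 : (fun _ : Fin n => c) = P *ᵥ (fun _ => c) := by
        funext i
        rw [hPmv]
        simp only [Finset.sum_const, Finset.card_univ, Fintype.card_fin, nsmul_eq_mul]
        field_simp
      rw [h1, mulVec_mulVec, hQX, hXdef, sub_mul, hMinvP, hP2, sub_self, zero_mulVec]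
  · -- the resistance identity
    rw [hpinvQ]
    have hGe : ∀ i j, G i j = (-(1 / 2 : ℝ)) *
        (D i j - (1 / (n : ℝ)) * (∑ k, D i k) - (1 / (n : ℝ)) * (∑ k, D k j)
          + (1 / (n : ℝ)) * ((1 / (n : ℝ)) * (∑ k, ∑ l, D k l))) := by
      intro i j
      have hexp : J * D * J = D - P * D - D * P + P * D * P := by
        rw [hJdef]; noncomm_ring
      have hPAe : ∀ (A : Matrix (Fin n) (Fin n) ℝ) (i j : Fin n),
          (P * A) i j = (1 / (n : ℝ)) * ∑ k, A k j := by
        intro A i j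
        simp [hPdef, Matrix.mul_apply, Finset.mul_sum, one_div]
      have hAPe : ∀ (A : Matrix (Fin n) (Fin n) ℝ) (i j : Fin n),
          (A * P) i j = (1 / (n : ℝ)) * ∑ k, A i k := by
        intro A i j
        simp only [hPdef, Matrix.mul_apply, Matrix.smul_apply, Matrix.of_apply,
          smul_eq_mul, mul_one, one_div]
        rw [Finset.mul_sum]
        exact Finset.sum_congr rfl fun k _ => by ring
      have hPD : (P * D) i j = (1 / (n : ℝ)) * (∑ k, D k j) := hPAe D i j
      have hDP : (D * P) i j = (1 / (n : ℝ)) * (∑ k, D i k) := hAPe D i j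
      have hPDP : (P * D * P) i j = (1 / (n : ℝ)) * ((1 / (n : ℝ)) * (∑ k, ∑ l, D k l)) := by
        have h0 : (P * D * P) i j = (1 / (n : ℝ)) * ∑ k, (D * P) k j := by
          rw [Matrix.mul_assoc]
          exact hPAe (D * P) i j
        rw [h0]
        simp only [hAPe]
        rw [Finset.mul_sum]
        conv_rhs => rw [Finset.mul_sum, Finset.mul_sum]
      rw [hGJ, hexp]
      simp only [Matrix.smul_apply, Matrix.add_apply, Matrix.sub_apply, smul_eq_mul]
      rw [hPD, hDP, hPDP]
      ring
    have hrow : ∀ i, (∑ k, D k i) = ∑ k, D i k := by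
      intro i
      refine Finset.sum_congr rfl fun k _ => ?_
      conv_lhs => rw [← hsym]
      rfl
    rw [two_nsmul]
    funext i j
    simp only [Matrix.sub_apply, Matrix.add_apply, Matrix.of_apply]
    rw [hGe i j, hGe i i, hGe j j, hdiag i, hdiag j, hrow i, hrow j]
    ring
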